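/- Fix a measurable regressor f : 𝒳 → ℝ with E[(f(X)−Y)²] < ∞, and let r_f(x) = 1{R(f,x) ≤ c} be the rejector induced by f. Then r_f minimizes the RwR loss of f over all measurable rejectors: L_RwR(f, r_f) ≤ L_RwR(f, r) for every measurable r : 𝒳 → {0,1}. -/

import Mathlib

open MeasureTheory Filter

noncomputable section

/-- The regression-with-rejection (RwR) loss
`L_RwR(f,r) = E[ r(X)·(f(X)−Y)² + (1−r(X))·c ]`. -/
def LRwR {Ω : Type*} [MeasurableSpace Ω] {d : ℕ} (μ : Measure Ω)
    (X : Ω → EuclideanSpace ℝ (Fin d)) (Y : Ω → ℝ) (c : ℝ)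
    (f r : EuclideanSpace ℝ (Fin d) → ℝ) : ℝ :=
  ∫ ω, r (X ω) * (f (X ω) - Y ω) ^ 2 + (1 - r (X ω)) * c ∂μ

/-- `g : 𝒳 → ℝ` is a measurable version of the conditional expectation
`E[Z | X]`, i.e. `g(X) = E[Z | σ(X)]` a.s. -/
def IsCondMean {Ω : Type*} [MeasurableSpace Ω] {d : ℕ} (μ : Measure Ω)
    (X : Ω → EuclideanSpace ℝ (Fin d)) (Z : Ω → ℝ)
    (g : EuclideanSpace ℝ (Fin d) → ℝ) : Prop :=
  (fun ω => g (X ω)) =ᵐ[μ] μ[Z | MeasurableSpace.comap X inferInstance]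

lemma swap_int {Ω : Type*} [MeasurableSpace Ω] {d : ℕ}
    (μ : Measure Ω) [IsProbabilityMeasure μ]
    (X : Ω → EuclideanSpace ℝ (Fin d)) (hX : Measurable X)
    (Z : Ω → ℝ) (hZ : Integrable Z μ)
    (Rf : EuclideanSpace ℝ (Fin d) → ℝ)
    (hRf : (fun ω => Rf (X ω)) =ᵐ[μ] μ[Z | MeasurableSpace.comap X inferInstance])
    (g : EuclideanSpace ℝ (Fin d) → ℝ) (hg : Measurable g)
    (hg01 : ∀ x, g x = 0 ∨ g x = 1) :
    ∫ ω, g (X ω) * Z ω ∂μ = ∫ ω, g (X ω) * Rf (X ω) ∂μ := by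
  have hm : MeasurableSpace.comap X
      (inferInstance : MeasurableSpace (EuclideanSpace ℝ (Fin d))) ≤ ‹MeasurableSpace Ω› :=
    hX.comap_le
  haveI : SigmaFinite (μ.trim hm) := by
    have : IsFiniteMeasure (μ.trim hm) := isFiniteMeasure_trim hm
    infer_instance
  set s : Set Ω := X ⁻¹' (g ⁻¹' {1}) with hs_def
  have hs : MeasurableSet[MeasurableSpace.comap X inferInstance] s := ⟨g ⁻¹' {1}, hg (measurableSet_singleton 1), rfl⟩
  have hmem : ∀ ω, ω ∈ s ↔ g (X ω) = 1 := fun ω => Iff.rfl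
  have hind : ∀ (h : Ω → ℝ) (ω : Ω), g (X ω) * h ω = s.indicator h ω := by
    intro h ω
    by_cases hω : ω ∈ s
    · rw [Set.indicator_of_mem hω, (hmem ω).1 hω, one_mul]
    · rw [Set.indicator_of_notMem hω]
      rcases hg01 (X ω) with h0 | h1
      · rw [h0, zero_mul]
      · exact absurd ((hmem ω).2 h1) hω
  calc ∫ ω, g (X ω) * Z ω ∂μ = ∫ ω, s.indicator Z ω ∂μ := by
        simp_rw [hind Z]
    _ = ∫ ω in s, Z ω ∂μ := integral_indicator (hm _ hs)
    _ = ∫ ω in s, (μ[Z | MeasurableSpace.comap X inferInstance]) ω ∂μ := (setIntegral_condExp hm hZ hs).symm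
    _ = ∫ ω in s, Rf (X ω) ∂μ :=
        integral_congr_ae (ae_restrict_of_ae hRf.symm)
    _ = ∫ ω, s.indicator (fun ω => Rf (X ω)) ω ∂μ := (integral_indicator (hm _ hs)).symm
    _ = ∫ ω, g (X ω) * Rf (X ω) ∂μ := by simp_rw [← hind]

/-- the induced rejector `r_f(x) = 1{R(f,x) ≤ c}` minimizes the
RwR loss of `f` over all measurable rejectors. -/
theorem stmt4 {Ω : Type*} [MeasurableSpace Ω] {d : ℕ}
    (μ : Measure Ω) [IsProbabilityMeasure μ]
    (X : Ω → EuclideanSpace ℝ (Fin d)) (Y : Ω → ℝ)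
    (hX : Measurable X) (hY : Measurable Y)
    (hY2 : Integrable (fun ω => (Y ω) ^ 2) μ)
    (c : ℝ) (hc : 0 < c)
    (f : EuclideanSpace ℝ (Fin d) → ℝ) (hf : Measurable f)
    (hf2 : Integrable (fun ω => (f (X ω) - Y ω) ^ 2) μ)
    (Rf : EuclideanSpace ℝ (Fin d) → ℝ) (hRf_m : Measurable Rf)
    (hRf : IsCondMean μ X (fun ω => (f (X ω) - Y ω) ^ 2) Rf)
    (r : EuclideanSpace ℝ (Fin d) → ℝ) (hr_m : Measurable r)
    (hr01 : ∀ x, r x = 0 ∨ r x = 1) :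
    LRwR μ X Y c f (fun x => if Rf x ≤ c then 1 else 0) ≤ LRwR μ X Y c f r := by
  set rf : EuclideanSpace ℝ (Fin d) → ℝ := fun x => if Rf x ≤ c then 1 else 0 with hrf_def
  have hrf_m : Measurable rf :=
    Measurable.ite (measurableSet_le hRf_m measurable_const) measurable_const measurable_const
  have hrf01 : ∀ x, rf x = 0 ∨ rf x = 1 := by
    intro x; by_cases h : Rf x ≤ c <;> simp [hrf_def, h]
  set Z : Ω → ℝ := fun ω => (f (X ω) - Y ω) ^ 2 with hZ_def
  have hRfX_int : Integrable (fun ω => Rf (X ω)) μ := integrable_condExp.congr hRf.symm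
  -- integrability helpers
  have hbdd : ∀ (g : EuclideanSpace ℝ (Fin d) → ℝ), (∀ x, g x = 0 ∨ g x = 1) →
      ∃ C, ∀ ω, ‖g (X ω)‖ ≤ C := by
    intro g hg01
    refine ⟨1, fun ω => ?_⟩
    rcases hg01 (X ω) with h | h <;> simp [h]
  have hbdd' : ∀ (g : EuclideanSpace ℝ (Fin d) → ℝ), (∀ x, g x = 0 ∨ g x = 1) →
      ∃ C, ∀ ω, ‖1 - g (X ω)‖ ≤ C := by
    intro g hg01
    refine ⟨1, fun ω => ?_⟩
    rcases hg01 (X ω) with h | h <;> simp [h]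
  have int1 : ∀ (g : EuclideanSpace ℝ (Fin d) → ℝ), Measurable g →
      (∀ x, g x = 0 ∨ g x = 1) → Integrable (fun ω => g (X ω) * Rf (X ω)) μ := by
    intro g hg hg01
    exact hRfX_int.bdd_mul ((hg.comp hX).aestronglyMeasurable) (ae_of_all _ (hbdd g hg01).choose_spec)
  have int2 : ∀ (g : EuclideanSpace ℝ (Fin d) → ℝ), Measurable g →
      (∀ x, g x = 0 ∨ g x = 1) → Integrable (fun ω => (1 - g (X ω)) * c) μ := by
    intro g hg hg01
    exact (integrable_const c).bdd_mul
      ((measurable_const.sub (hg.comp hX)).aestronglyMeasurable) (ae_of_all _ (hbdd' g hg01).choose_spec)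
  have int3 : ∀ (g : EuclideanSpace ℝ (Fin d) → ℝ), Measurable g →
      (∀ x, g x = 0 ∨ g x = 1) → Integrable (fun ω => g (X ω) * Z ω) μ := by
    intro g hg hg01
    exact hf2.bdd_mul ((hg.comp hX).aestronglyMeasurable) (ae_of_all _ (hbdd g hg01).choose_spec)
  -- rewrite both losses with Rf in place of Z
  have key : ∀ (g : EuclideanSpace ℝ (Fin d) → ℝ), Measurable g →
      (∀ x, g x = 0 ∨ g x = 1) →
      LRwR μ X Y c f g = ∫ ω, g (X ω) * Rf (X ω) + (1 - g (X ω)) * c ∂μ := by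
    intro g hg hg01
    unfold LRwR
    rw [integral_add (int3 g hg hg01) (int2 g hg hg01),
      integral_add (int1 g hg hg01) (int2 g hg hg01),
      swap_int μ X hX Z hf2 Rf hRf g hg hg01]
  rw [key rf hrf_m hrf01, key r hr_m hr01]
  refine integral_mono ((int1 rf hrf_m hrf01).add (int2 rf hrf_m hrf01))
    ((int1 r hr_m hr01).add (int2 r hr_m hr01)) ?_
  intro ω
  rcases hr01 (X ω) with h | h <;> by_cases hle : Rf (X ω) ≤ c <;>
    simp only [hrf_def, h, hle, if_pos, if_neg, not_false_iff] <;> nlinarith
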